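/- For deviated pursuit against a nonmaneuvering target, differentiating t_go = r·sec δ·[v + v_T·cos(γ_T − θ + δ)]/(v² − v_T²) with ξ = t_go − (T_f − t) gives ξ̇ = r²θ̇²sec²δ/(v² − v_T²) − (r²θ̇ sec²δ)/(v(v² − v_T²))·a when a_T = 0, where a is the interceptor's lateral acceleration, θ̇ is determined by r θ̇ = v_T sin(γ_T − θ) − v sin δ, ṙ = v_T cos(γ_T − θ) − v cos δ, γ̇ = a/v, δ = γ − θ, and γ_T is constant. In particular, choosing a = v θ̇ yields ξ̇ = 0. -/

import Mathlib

open Real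

private lemma xi_dot_key (v vT r b c s C S : ℝ) (hv : v ≠ 0) (hr : r ≠ 0) (hc : c ≠ 0)
    (hD : v ^ 2 - vT ^ 2 ≠ 0)
    (hu : s ^ 2 + c ^ 2 = 1) (hU : S ^ 2 + C ^ 2 = 1) :
    (((vT * C - v * c) * c⁻¹ +
        r * (-(-s * (b / v - (vT * S - v * s) / r)) / c ^ 2)) *
        (v + vT * (C * c - S * s)) +
      r * c⁻¹ *
        (0 + vT * (-(S * c + C * s) * (0 - (vT * S - v * s) / r + (b / v - (vT * S - v * s) / r))))) /
        (v ^ 2 - vT ^ 2) - (0 - 1)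
    = r ^ 2 * ((vT * S - v * s) / r) ^ 2 * (c⁻¹) ^ 2 / (v ^ 2 - vT ^ 2)
      - r ^ 2 * ((vT * S - v * s) / r) * (c⁻¹) ^ 2 / (v * (v ^ 2 - vT ^ 2)) * b := by
  rw [← sub_eq_zero]
  have hE : (((vT * C - v * c) * c⁻¹ +
        r * (-(-s * (b / v - (vT * S - v * s) / r)) / c ^ 2)) *
        (v + vT * (C * c - S * s)) +
      r * c⁻¹ *
        (0 + vT * (-(S * c + C * s) * (0 - (vT * S - v * s) / r + (b / v - (vT * S - v * s) / r))))) /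
        (v ^ 2 - vT ^ 2) - (0 - 1)
    - (r ^ 2 * ((vT * S - v * s) / r) ^ 2 * (c⁻¹) ^ 2 / (v ^ 2 - vT ^ 2)
      - r ^ 2 * ((vT * S - v * s) / r) * (c⁻¹) ^ 2 / (v * (v ^ 2 - vT ^ 2)) * b)
    = ((-r * (b / v) * vT * S + (vT * S - v * s) * vT * S - v * vT * C * c) * (s ^ 2 + c ^ 2 - 1)
      + vT ^ 2 * c ^ 2 * (S ^ 2 + C ^ 2 - 1)) / ((v ^ 2 - vT ^ 2) * c ^ 2) := by
    field_simp
    ring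
  have hu' : s ^ 2 + c ^ 2 - 1 = 0 := by linarith
  have hU' : S ^ 2 + C ^ 2 - 1 = 0 := by linarith
  rw [hE, hu', hU']
  ring

/-- Deviated pursuit against a nonmaneuvering target: with ξ = t_go − (T_f − t), one has
ξ̇ = r²θ̇² sec²δ/(v² − v_T²) − (r²θ̇ sec²δ)/(v(v² − v_T²))·a; in particular a = vθ̇ gives
ξ̇ = 0. -/
theorem xi_dot_deviated_pursuit (v vT γT T_f : ℝ) (hv : 0 < v) (hvT : 0 ≤ vT) (hvvT : vT < v)
    (r θ γ a : ℝ → ℝ) (t : ℝ) (hrt : 0 < r t)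
    (hδ : γ t - θ t ∈ Set.Ioo (-(Real.pi / 2)) (Real.pi / 2))
    (hr : HasDerivAt r (vT * Real.cos (γT - θ t) - v * Real.cos (γ t - θ t)) t)
    (hθ : HasDerivAt θ ((vT * Real.sin (γT - θ t) - v * Real.sin (γ t - θ t)) / r t) t)
    (hγ : HasDerivAt γ (a t / v) t) :
    HasDerivAt
      (fun s => r s * (Real.cos (γ s - θ s))⁻¹ *
          (v + vT * Real.cos (γT - θ s + (γ s - θ s))) / (v ^ 2 - vT ^ 2) - (T_f - s))
      (r t ^ 2 * ((vT * Real.sin (γT - θ t) - v * Real.sin (γ t - θ t)) / r t) ^ 2 *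
          ((Real.cos (γ t - θ t))⁻¹) ^ 2 / (v ^ 2 - vT ^ 2)
        - r t ^ 2 * ((vT * Real.sin (γT - θ t) - v * Real.sin (γ t - θ t)) / r t) *
            ((Real.cos (γ t - θ t))⁻¹) ^ 2 / (v * (v ^ 2 - vT ^ 2)) * a t) t ∧
    (a t = v * ((vT * Real.sin (γT - θ t) - v * Real.sin (γ t - θ t)) / r t) →
      HasDerivAt
        (fun s => r s * (Real.cos (γ s - θ s))⁻¹ *
            (v + vT * Real.cos (γT - θ s + (γ s - θ s))) / (v ^ 2 - vT ^ 2) - (T_f - s))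
        0 t) := by
  have hvne : v ≠ 0 := hv.ne'
  have hrne : r t ≠ 0 := hrt.ne'
  have hD : v ^ 2 - vT ^ 2 ≠ 0 := by nlinarith
  have hc : Real.cos (γ t - θ t) ≠ 0 := (Real.cos_pos_of_mem_Ioo hδ).ne'
  have hδd : HasDerivAt (fun s => γ s - θ s)
      (a t / v - (vT * Real.sin (γT - θ t) - v * Real.sin (γ t - θ t)) / r t) t := hγ.sub hθ
  have hinv : HasDerivAt (fun s => (Real.cos (γ s - θ s))⁻¹)
      (-(-Real.sin (γ t - θ t) *
          (a t / v - (vT * Real.sin (γT - θ t) - v * Real.sin (γ t - θ t)) / r t)) /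
        Real.cos (γ t - θ t) ^ 2) t := hδd.cos.inv hc
  have hA : HasDerivAt (fun s => γT - θ s + (γ s - θ s))
      (0 - (vT * Real.sin (γT - θ t) - v * Real.sin (γ t - θ t)) / r t +
        (a t / v - (vT * Real.sin (γT - θ t) - v * Real.sin (γ t - θ t)) / r t)) t :=
    ((hasDerivAt_const t γT).sub hθ).add hδd
  have hM : HasDerivAt (fun s => v + vT * Real.cos (γT - θ s + (γ s - θ s)))
      (0 + vT * (-Real.sin (γT - θ t + (γ t - θ t)) *
        (0 - (vT * Real.sin (γT - θ t) - v * Real.sin (γ t - θ t)) / r t +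
          (a t / v - (vT * Real.sin (γT - θ t) - v * Real.sin (γ t - θ t)) / r t)))) t :=
    (hasDerivAt_const t (v : ℝ)).add (hA.cos.const_mul vT)
  have hTf : HasDerivAt (fun s : ℝ => T_f - s) (0 - 1) t :=
    (hasDerivAt_const t T_f).sub (hasDerivAt_id t)
  have H := (((hr.mul hinv).mul hM).div_const (v ^ 2 - vT ^ 2)).sub hTf
  rw [Real.cos_add, Real.sin_add] at H
  simp only [Pi.mul_apply] at H
  have hkey := xi_dot_key v vT (r t) (a t) (Real.cos (γ t - θ t)) (Real.sin (γ t - θ t))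
    (Real.cos (γT - θ t)) (Real.sin (γT - θ t)) hvne hrne hc hD
    (Real.sin_sq_add_cos_sq _) (Real.sin_sq_add_cos_sq _)
  rw [hkey] at H
  refine ⟨H, fun ha => ?_⟩
  have h0 : r t ^ 2 * ((vT * Real.sin (γT - θ t) - v * Real.sin (γ t - θ t)) / r t) ^ 2 *
        ((Real.cos (γ t - θ t))⁻¹) ^ 2 / (v ^ 2 - vT ^ 2)
      - r t ^ 2 * ((vT * Real.sin (γT - θ t) - v * Real.sin (γ t - θ t)) / r t) *
          ((Real.cos (γ t - θ t))⁻¹) ^ 2 / (v * (v ^ 2 - vT ^ 2)) * a t = 0 := by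
    rw [ha]
    field_simp
    ring
  rw [h0] at H
  exact H
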